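/- Let A be a real n-by-n Hurwitz matrix, B ∈ ℝ^n a vector, C ∈ ℝ^n a (row) vector, and let u : ℝ → ℝ be measurable with |u(τ)| ≤ M_u for all τ ∈ ℝ. Fix t ∈ ℝ, T_f ≥ 0 and T > 0, and define y(t+T_f) = C · ∫_{−∞}^{t+T_f} exp((t+T_f−τ)A) B u(τ) dτ and the finite-input-history approximation ŷ(t+T_f) = C · ∫_{t−T}^{t+T_f} exp((t+T_f−τ)A) B u(τ) dτ. Then there exist positive scalars α > 0 and β > 0, independent of T, such that |y(t+T_f) − ŷ(t+T_f)| ≤ β · exp(−α T); in particular the forward output prediction error from truncating the input history to length T (before time t) decays exponentially in T. -/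

import Mathlib

open NormedSpace MeasureTheory
open scoped RealInnerProductSpace

/-- A real square matrix is Hurwitz if every eigenvalue of it, viewed as a complex
matrix, has strictly negative real part. -/
def Matrix.IsHurwitz {n : ℕ} (A : Matrix (Fin n) (Fin n) ℝ) : Prop :=
  ∀ μ ∈ spectrum ℂ (A.map (algebraMap ℝ ℂ)), μ.re < 0

/-- The action of a square matrix on Euclidean space. -/
noncomputable def matVec {n : ℕ} (A : Matrix (Fin n) (Fin n) ℝ)
    (v : EuclideanSpace ℝ (Fin n)) : EuclideanSpace ℝ (Fin n) :=
  Matrix.toEuclideanLin A v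

section TruncAuxSec
open scoped Matrix.Norms.L2Operator ENNReal
open Filter

open scoped Matrix.Norms.L2Operator ENNReal

namespace TruncAux

variable {n : ℕ}


variable {n : ℕ}

/-- If `v` is an eigenvector of `M` with eigenvalue `μ`, it is an eigenvector of `exp M`
with eigenvalue `exp μ`. -/
lemma exp_mulVec {M : Matrix (Fin n) (Fin n) ℂ} {v : Fin n → ℂ} {μ : ℂ}
    (h : M.mulVec v = μ • v) :
    (exp M).mulVec v = Complex.exp μ • v := by
  have hpow : ∀ k : ℕ, (M ^ k).mulVec v = (μ ^ k) • v := by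
    intro k
    induction k with
    | zero => simp [Matrix.one_mulVec]
    | succ k ih =>
      rw [pow_succ', ← Matrix.mulVec_mulVec, ih, Matrix.mulVec_smul, h, smul_smul, ← pow_succ]
  let L : Matrix (Fin n) (Fin n) ℂ →ₗ[ℂ] (Fin n → ℂ) :=
    { toFun := fun N => N.mulVec v
      map_add' := fun N₁ N₂ => Matrix.add_mulVec N₁ N₂ v
      map_smul' := fun c N => Matrix.smul_mulVec c N v }
  let Lc : Matrix (Fin n) (Fin n) ℂ →L[ℂ] (Fin n → ℂ) := LinearMap.toContinuousLinearMap L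
  have hLc : ∀ N, Lc N = N.mulVec v := fun _ => rfl
  have h1 : (exp M).mulVec v = Lc (∑' k : ℕ, (k.factorial : ℂ)⁻¹ • M ^ k) := by
    rw [← hLc, exp_eq_tsum ℂ]
  rw [h1, Lc.map_tsum (expSeries_summable' (𝕂 := ℂ) M)]
  have h2 : ∀ k : ℕ, Lc ((k.factorial : ℂ)⁻¹ • M ^ k)
      = ((k.factorial : ℂ)⁻¹ * μ ^ k) • v := by
    intro k
    rw [_root_.map_smul, hLc, hpow k, smul_smul]
  rw [tsum_congr h2, Summable.tsum_smul_const]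
  · congr 1
    have := exp_eq_tsum (𝕂 := ℂ) (𝔸 := ℂ)
    rw [Complex.exp_eq_exp_ℂ, this]
    simp [smul_eq_mul]
  · simpa [smul_eq_mul] using expSeries_summable' (𝕂 := ℂ) μ



/-- Spectral mapping bound: every element of the spectrum of `exp Ac` has norm
`< 1` when `A` is Hurwitz. -/
lemma spec_exp_lt_one {A : Matrix (Fin n) (Fin n) ℝ}
    (hA : ∀ μ ∈ spectrum ℂ (A.map (algebraMap ℝ ℂ)), μ.re < 0) :
    ∀ μ ∈ spectrum ℂ (exp (A.map (algebraMap ℝ ℂ))), ‖μ‖ < 1 := by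
  intro μ hμ
  set Ac := A.map (algebraMap ℝ ℂ) with hAc
  -- move to endomorphisms
  have hμ' : μ ∈ spectrum ℂ (Matrix.toLinAlgEquiv' (exp Ac)) := by
    rwa [AlgEquiv.spectrum_eq]
  have hev : Module.End.HasEigenvalue (Matrix.toLinAlgEquiv' (exp Ac)) μ :=
    Module.End.hasEigenvalue_iff_mem_spectrum.mpr hμ'
  set g : Module.End ℂ (Fin n → ℂ) := Matrix.toLinAlgEquiv' (exp Ac) with hg
  set f : Module.End ℂ (Fin n → ℂ) := Matrix.toLinAlgEquiv' Ac with hf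
  set E : Submodule ℂ (Fin n → ℂ) := Module.End.eigenspace g μ with hE
  have hEne : E ≠ ⊥ := hev
  have hfg : f * g = g * f := by
    rw [hf, hg, ← map_mul, ← map_mul]
    congr 1
    exact (Commute.refl Ac).exp_right.eq
  -- E is invariant under f
  have hinv : ∀ x ∈ E, f x ∈ E := by
    intro x hx
    rw [hE, Module.End.mem_eigenspace_iff] at hx ⊢
    have : g (f x) = f (g x) := by
      have := congrArg (fun h : Module.End ℂ (Fin n → ℂ) => h x) hfg
      simpa using this.symm
    rw [this, hx, _root_.map_smul]
  have hnt : Nontrivial E := Submodule.nontrivial_iff_ne_bot.mpr hEne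
  obtain ⟨lam, hlam⟩ := Module.End.exists_eigenvalue (f.restrict hinv)
  obtain ⟨w, hw⟩ := hlam.exists_hasEigenvector
  have hwne : (w : Fin n → ℂ) ≠ 0 := fun hc => hw.right (Subtype.ext hc)
  have hfv : f w = lam • (w : Fin n → ℂ) := by
    have := congrArg Subtype.val hw.apply_eq_smul
    simpa [LinearMap.restrict_apply] using this
  have hmul : Ac.mulVec w = lam • (w : Fin n → ℂ) := by
    rw [← hfv, hf]; simp [Matrix.toLinAlgEquiv'_apply, Matrix.toLin'_apply]
  -- hence exp Ac has eigenvalue exp lam at w, but also μ at w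
  have hgv : (exp Ac).mulVec w = μ • (w : Fin n → ℂ) := by
    have hwE : g ↑w = μ • (w : Fin n → ℂ) := Module.End.mem_eigenspace_iff.mp w.2
    have hgw : (exp Ac).mulVec w = g w := by
      simp [hg, Matrix.toLinAlgEquiv'_apply, Matrix.toLin'_apply]
    rw [hgw, hwE]
  have hexp : Complex.exp lam • (w : Fin n → ℂ) = μ • (w : Fin n → ℂ) := by
    rw [← exp_mulVec hmul, hgv]
  have hμeq : μ = Complex.exp lam := by
    by_contra hne
    have : (Complex.exp lam - μ) • (w : Fin n → ℂ) = 0 := by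
      rw [sub_smul, hexp, sub_self]
    rcases smul_eq_zero.mp this with h | h
    · exact hne (sub_eq_zero.mp h).symm
    · exact hwne h
  -- lam is an eigenvalue of Ac
  have hlamspec : lam ∈ spectrum ℂ Ac := by
    rw [← AlgEquiv.spectrum_eq (Matrix.toLinAlgEquiv' (R := ℂ) (n := Fin n)) Ac,
      ← Module.End.hasEigenvalue_iff_mem_spectrum]
    exact Module.End.hasEigenvalue_of_hasEigenvector
      ⟨Module.End.mem_eigenspace_iff.mpr (by rw [← hf]; exact hfv), hwne⟩
  have := hA lam hlamspec
  rw [hμeq, Complex.norm_exp]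
  exact Real.exp_lt_one_iff.mpr this



variable {n : ℕ}

lemma pow_decay {M : Matrix (Fin n) (Fin n) ℂ}
    (h : ∀ μ ∈ spectrum ℂ M, ‖μ‖ < 1) :
    ∃ r : ℝ, 0 < r ∧ r < 1 ∧ ∃ c : ℝ, 0 < c ∧ ∀ k : ℕ, ‖M ^ k‖ ≤ c * r ^ k := by
  rcases subsingleton_or_nontrivial (Matrix (Fin n) (Fin n) ℂ) with hs | hnt
  · refine ⟨1/2, by norm_num, by norm_num, 1, one_pos, fun k => ?_⟩
    have : M ^ k = 0 := Subsingleton.elim _ _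
    rw [this, norm_zero]
    positivity
  · obtain ⟨z, hz, hzr⟩ := spectrum.exists_nnnorm_eq_spectralRadius M
    set ρ : ℝ := ‖z‖ with hρ
    have hρ0 : 0 ≤ ρ := norm_nonneg _
    have hρ1 : ρ < 1 := h z hz
    set r : ℝ := (1 + ρ) / 2 with hr
    have hr0 : 0 < r := by positivity
    have hρr : ρ < r := by rw [hr]; linarith
    have hr1 : r < 1 := by rw [hr]; linarith
    -- spectral radius < ofReal r
    have hsp : spectralRadius ℂ M < ENNReal.ofReal r := by
      rw [← hzr]
      have hco : (‖z‖₊ : ℝ≥0∞) = ENNReal.ofReal ρ := by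
        rw [hρ]; exact (ofReal_norm z).symm
      rw [hco]
      exact ENNReal.ofReal_lt_ofReal_iff hr0 |>.mpr hρr
    have hto := spectrum.pow_norm_pow_one_div_tendsto_nhds_spectralRadius M
    have hev : ∀ᶠ k : ℕ in atTop, ENNReal.ofReal (‖M ^ k‖ ^ (1 / (k:ℝ))) < ENNReal.ofReal r :=
      hto.eventually_lt_const hsp
    obtain ⟨N, hN⟩ := hev.exists_forall_of_atTop
    set c : ℝ := 1 + ∑ k ∈ Finset.range (N + 1), ‖M ^ k‖ / r ^ k with hc
    have hc1 : 1 ≤ c := by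
      rw [hc]
      have : 0 ≤ ∑ k ∈ Finset.range (N + 1), ‖M ^ k‖ / r ^ k :=
        Finset.sum_nonneg fun k _ => by positivity
      linarith
    refine ⟨r, hr0, hr1, c, by linarith, fun k => ?_⟩
    rcases lt_or_ge k (N + 1) with hk | hk
    · have hmem : k ∈ Finset.range (N + 1) := Finset.mem_range.mpr hk
      have h1 : ‖M ^ k‖ / r ^ k ≤ ∑ j ∈ Finset.range (N + 1), ‖M ^ j‖ / r ^ j :=
        Finset.single_le_sum (f := fun j => ‖M ^ j‖ / r ^ j)
          (fun j _ => by positivity) hmem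
      have h2 : ‖M ^ k‖ / r ^ k ≤ c := by rw [hc]; linarith
      calc ‖M ^ k‖ = ‖M ^ k‖ / r ^ k * r ^ k := by field_simp
        _ ≤ c * r ^ k := by
            apply mul_le_mul_of_nonneg_right h2 (by positivity)
    · -- k ≥ N + 1 ≥ 1
      have hk0 : k ≠ 0 := by omega
      have hlt := hN k (by omega)
      have hlt' : ‖M ^ k‖ ^ (1 / (k:ℝ)) < r := by
        have := (ENNReal.ofReal_lt_ofReal_iff hr0).mp hlt
        exact this
      have hkpos : (0:ℝ) < k := by positivity
      have hMk : ‖M ^ k‖ = (‖M ^ k‖ ^ (1 / (k:ℝ))) ^ (k:ℕ) := by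
        rw [← Real.rpow_natCast (‖M ^ k‖ ^ (1 / (k:ℝ))) k, ← Real.rpow_mul (norm_nonneg _),
          one_div, inv_mul_cancel₀ (by exact_mod_cast hkpos.ne'), Real.rpow_one]
      have : ‖M ^ k‖ ≤ r ^ k := by
        rw [hMk]
        exact pow_le_pow_left₀ (Real.rpow_nonneg (norm_nonneg _) _) hlt'.le k
      calc ‖M ^ k‖ ≤ r ^ k := this
        _ ≤ c * r ^ k := le_mul_of_one_le_left (by positivity) hc1



variable {n : ℕ}

lemma norm_one_le : ‖(1 : Matrix (Fin n) (Fin n) ℂ)‖ ≤ 1 := by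
  rw [Matrix.cstar_norm_def, map_one]
  exact ContinuousLinearMap.norm_id_le

lemma norm_pow_le (X : Matrix (Fin n) (Fin n) ℂ) (k : ℕ) : ‖X ^ k‖ ≤ ‖X‖ ^ k := by
  induction k with
  | zero => simpa using norm_one_le
  | succ k ih =>
    calc ‖X ^ (k+1)‖ = ‖X * X ^ k‖ := by rw [pow_succ']
      _ ≤ ‖X‖ * ‖X ^ k‖ := norm_mul_le _ _
      _ ≤ ‖X‖ * ‖X‖ ^ k := by
          exact mul_le_mul_of_nonneg_left ih (norm_nonneg _)
      _ = ‖X‖ ^ (k+1) := by rw [pow_succ']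

lemma norm_exp_le (X : Matrix (Fin n) (Fin n) ℂ) : ‖exp X‖ ≤ Real.exp ‖X‖ := by
  rw [exp_eq_tsum ℂ]
  have hsum := expSeries_summable' (𝕂 := ℂ) X
  calc ‖∑' k : ℕ, ((k.factorial : ℂ))⁻¹ • X ^ k‖
      ≤ ∑' k : ℕ, ‖((k.factorial : ℂ))⁻¹ • X ^ k‖ :=
        norm_tsum_le_tsum_norm (norm_expSeries_summable' (𝕂 := ℂ) X)
    _ ≤ ∑' k : ℕ, ‖X‖ ^ k / k.factorial := by
        refine Summable.tsum_le_tsum (fun k => ?_) (norm_expSeries_summable' (𝕂 := ℂ) X)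
          (Real.summable_pow_div_factorial ‖X‖)
        rw [norm_smul]
        have h1 : ‖((k.factorial : ℂ))⁻¹‖ = (k.factorial : ℝ)⁻¹ := by
          rw [norm_inv]
          simp
        rw [h1, div_eq_inv_mul]
        exact mul_le_mul_of_nonneg_left (norm_pow_le X k) (by positivity)
    _ = Real.exp ‖X‖ := by
        rw [Real.exp_eq_exp_ℝ, exp_eq_tsum_div]

lemma exp_smul_decay_complex {A : Matrix (Fin n) (Fin n) ℝ}
    (hA : ∀ μ ∈ spectrum ℂ (A.map (algebraMap ℝ ℂ)), μ.re < 0)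
    (hspec : ∀ μ ∈ spectrum ℂ (exp (A.map (algebraMap ℝ ℂ))), ‖μ‖ < 1) :
    ∃ α : ℝ, 0 < α ∧ ∃ K : ℝ, 0 < K ∧ ∀ s : ℝ, 0 ≤ s →
      ‖exp (s • (A.map (algebraMap ℝ ℂ)))‖ ≤ K * Real.exp (-α * s) := by
  set Ac := A.map (algebraMap ℝ ℂ) with hAc
  obtain ⟨r, hr0, hr1, c, hc0, hpow⟩ := pow_decay hspec
  have hlog : Real.log r < 0 := Real.log_neg hr0 hr1
  refine ⟨-Real.log r, by linarith, c * Real.exp ‖Ac‖ / r, by positivity, fun s hs => ?_⟩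
  set k : ℕ := ⌊s⌋₊ with hk
  have hks : (k : ℝ) ≤ s := Nat.floor_le hs
  have hsk : s < k + 1 := Nat.lt_floor_add_one s
  have hsplit : s • Ac = (k : ℝ) • Ac + (s - k) • Ac := by
    rw [← add_smul]; ring_nf
  have hcomm : Commute ((k : ℝ) • Ac) ((s - k) • Ac) :=
    ((Commute.refl Ac).smul_left _).smul_right _
  have hexp : exp (s • Ac) = (exp Ac) ^ k * exp ((s - k) • Ac) := by
    rw [hsplit, Matrix.exp_add_of_commute _ _ hcomm]
    congr 1
    rw [Nat.cast_smul_eq_nsmul ℝ k Ac, Matrix.exp_nsmul]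
  have h1 : ‖exp ((s - k) • Ac)‖ ≤ Real.exp ‖Ac‖ := by
    refine (norm_exp_le _).trans ?_
    apply Real.exp_le_exp.mpr
    rw [norm_smul, Real.norm_eq_abs, abs_of_nonneg (by linarith)]
    nlinarith [norm_nonneg Ac]
  have h2 : r ^ k ≤ Real.exp (-(-Real.log r) * s) / r := by
    have hrk : r ^ k = Real.exp ((k : ℝ) * Real.log r) := by
      rw [← Real.exp_log hr0, ← Real.exp_nat_mul, Real.exp_log hr0]
    calc r ^ k = Real.exp ((k : ℝ) * Real.log r) := hrk
      _ ≤ Real.exp ((s - 1) * Real.log r) := by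
          apply Real.exp_le_exp.mpr
          nlinarith
      _ = Real.exp (-(-Real.log r) * s) / r := by
          rw [show -(-Real.log r) * s = s * Real.log r by ring, sub_mul, one_mul,
            Real.exp_sub, Real.exp_log hr0]
  calc ‖exp (s • Ac)‖ ≤ ‖(exp Ac) ^ k‖ * ‖exp ((s - k) • Ac)‖ := by
        rw [hexp]; exact norm_mul_le _ _
    _ ≤ (c * r ^ k) * Real.exp ‖Ac‖ :=
        mul_le_mul (hpow k) h1 (norm_nonneg _) (by positivity)
    _ ≤ (c * (Real.exp (-(-Real.log r) * s) / r)) * Real.exp ‖Ac‖ := by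
        have := mul_le_mul_of_nonneg_left h2 hc0.le
        exact mul_le_mul_of_nonneg_right this (Real.exp_nonneg _)
    _ = c * Real.exp ‖Ac‖ / r * Real.exp (-(-Real.log r) * s) := by ring





lemma map_exp_smul (A : Matrix (Fin n) (Fin n) ℝ) (s : ℝ) :
    (exp (s • A)).map (algebraMap ℝ ℂ) = exp (s • A.map (algebraMap ℝ ℂ)) := by
  let φ : Matrix (Fin n) (Fin n) ℝ →ₐ[ℝ] Matrix (Fin n) (Fin n) ℂ :=
    (Algebra.ofId ℝ ℂ).mapMatrix
  have hcont : Continuous φ := φ.toLinearMap.continuous_of_finiteDimensional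
  have h1 : φ (exp (s • A)) = exp (φ (s • A)) := by
    letI : NormedAlgebra ℚ (Matrix (Fin n) (Fin n) ℝ) := NormedAlgebra.restrictScalars ℚ ℝ _
    exact map_exp φ hcont _
  have h2 : φ (s • A) = s • A.map (algebraMap ℝ ℂ) := by
    rw [_root_.map_smul]
    rfl
  have h3 : φ (exp (s • A)) = (exp (s • A)).map (algebraMap ℝ ℂ) := rfl
  rw [← h3, h1, h2]

lemma norm_matVec_le (E : Matrix (Fin n) (Fin n) ℝ) (x : EuclideanSpace ℝ (Fin n)) :
    ‖matVec E x‖ ≤ ‖E.map (algebraMap ℝ ℂ)‖ * ‖x‖ := by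
  set Ec := E.map (algebraMap ℝ ℂ) with hEc
  set xc : EuclideanSpace ℂ (Fin n) :=
    (WithLp.equiv 2 (Fin n → ℂ)).symm (fun i => (x i : ℂ)) with hxc
  have hx : ‖xc‖ = ‖x‖ := by
    rw [EuclideanSpace.norm_eq, EuclideanSpace.norm_eq]
    congr 1
    refine Finset.sum_congr rfl fun i _ => ?_
    simp [hxc]
  have hcast : ∀ i, (Ec.mulVec fun j => (x j : ℂ)) i = ((E.mulVec fun j => x j) i : ℂ) := by
    intro i
    simp [Matrix.mulVec, dotProduct, hEc, Matrix.map_apply]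
  have key : ‖matVec E x‖ = ‖(EuclideanSpace.equiv (Fin n) ℂ).symm (Ec.mulVec xc)‖ := by
    rw [EuclideanSpace.norm_eq, EuclideanSpace.norm_eq]
    congr 1
    refine Finset.sum_congr rfl fun i _ => ?_
    have h1 : (matVec E x) i = (E.mulVec fun j => x j) i := rfl
    have h2 : ((EuclideanSpace.equiv (Fin n) ℂ).symm (Ec.mulVec xc)) i
        = (Ec.mulVec fun j => (x j : ℂ)) i := rfl
    rw [h1, h2, hcast i]
    simp
  rw [key, ← hx]
  exact Matrix.l2_opNorm_mulVec Ec xc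


variable {n : ℕ}

lemma integrableOn_exp_mul_Iic {a : ℝ} (ha : 0 < a) (d : ℝ) :
    IntegrableOn (fun τ : ℝ => Real.exp (a * τ)) (Set.Iic d) := by
  have h1 : Integrable ((Set.Iic (a * d)).indicator Real.exp) := by
    rw [integrable_indicator_iff measurableSet_Iic]
    exact integrableOn_exp_Iic (a * d)
  have h2 := h1.comp_mul_left' (R := a) ha.ne'
  have h3 : ((Set.Iic (a * d)).indicator Real.exp) ∘ (fun τ : ℝ => a * τ)
      = (Set.Iic d).indicator (fun τ => Real.exp (a * τ)) := by
    funext τ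
    by_cases hτ : τ ≤ d
    · rw [Function.comp_apply,
        Set.indicator_of_mem (by simpa using (mul_le_mul_iff_right₀ ha).mpr hτ),
        Set.indicator_of_mem (by exact hτ)]
    · simp only [Set.mem_Iic, not_le] at hτ
      rw [Function.comp_apply, Set.indicator_of_notMem, Set.indicator_of_notMem]
      · simp only [Set.mem_Iic, not_le]; exact hτ
      · simp only [Set.mem_Iic, not_le]; exact (mul_lt_mul_iff_right₀ ha).mpr hτ
  have h2' : Integrable ((Set.Iic d).indicator fun τ => Real.exp (a * τ)) := by
    rw [← h3]; exact h2
  rw [← integrable_indicator_iff measurableSet_Iic]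
  exact h2'

lemma integral_exp_mul_Iic {a : ℝ} (ha : 0 < a) (d : ℝ) :
    ∫ τ in Set.Iic d, Real.exp (a * τ) = Real.exp (a * d) / a := by
  have hderiv : ∀ τ ∈ Set.Iic d, HasDerivAt (fun τ => Real.exp (a * τ) / a)
      (Real.exp (a * τ)) τ := by
    intro τ _
    have h1 : HasDerivAt (fun τ : ℝ => a * τ) a τ := by
      simpa using (hasDerivAt_id τ).const_mul a
    have h2 := h1.exp
    have h3 := h2.div_const a
    simpa [mul_comm, mul_div_assoc, mul_div_cancel_left₀ _ ha.ne'] using h3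
  have htend : Tendsto (fun τ => Real.exp (a * τ) / a) atBot (nhds 0) := by
    have h1 : Tendsto (fun τ : ℝ => a * τ) atBot atBot := by
      exact Tendsto.const_mul_atBot ha tendsto_id
    have h2 := Real.tendsto_exp_atBot.comp h1
    have := h2.div_const a
    simpa using this
  have := MeasureTheory.integral_Iic_of_hasDerivAt_of_tendsto' hderiv
    (integrableOn_exp_mul_Iic ha d) htend
  rw [this]
  simp


lemma matVec_exp_decay {A : Matrix (Fin n) (Fin n) ℝ}
    (hA : ∀ μ ∈ spectrum ℂ (A.map (algebraMap ℝ ℂ)), μ.re < 0) :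
    ∃ α : ℝ, 0 < α ∧ ∃ K : ℝ, 0 < K ∧ ∀ s : ℝ, 0 ≤ s → ∀ x : EuclideanSpace ℝ (Fin n),
      ‖matVec (exp (s • A)) x‖ ≤ K * Real.exp (-α * s) * ‖x‖ := by
  obtain ⟨α, hα, K, hK, hdec⟩ := exp_smul_decay_complex hA (spec_exp_lt_one hA)
  refine ⟨α, hα, K, hK, fun s hs x => ?_⟩
  calc ‖matVec (exp (s • A)) x‖
      ≤ ‖(exp (s • A)).map (algebraMap ℝ ℂ)‖ * ‖x‖ := norm_matVec_le _ _
    _ = ‖exp (s • A.map (algebraMap ℝ ℂ))‖ * ‖x‖ := by rw [map_exp_smul]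
    _ ≤ K * Real.exp (-α * s) * ‖x‖ :=
        mul_le_mul_of_nonneg_right (hdec s hs) (norm_nonneg _)

lemma continuous_matVec_exp (A : Matrix (Fin n) (Fin n) ℝ) (B : EuclideanSpace ℝ (Fin n))
    (d : ℝ) : Continuous fun τ : ℝ => matVec (exp ((d - τ) • A)) B := by
  let L : Matrix (Fin n) (Fin n) ℝ →ₗ[ℝ] EuclideanSpace ℝ (Fin n) :=
    { toFun := fun M => matVec M B
      map_add' := fun M N => by simp [matVec, map_add, LinearMap.add_apply]
      map_smul' := fun c M => by simp [matVec, _root_.map_smul, LinearMap.smul_apply] }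
  have hL : Continuous L := L.continuous_of_finiteDimensional
  have h1 : Continuous fun τ : ℝ => (d - τ) • A :=
    (continuous_const.sub continuous_id).smul continuous_const
  have h2 : Continuous fun τ : ℝ => exp ((d - τ) • A) := by
    letI : NormedAlgebra ℚ (Matrix (Fin n) (Fin n) ℝ) := NormedAlgebra.restrictScalars ℚ ℝ _
    exact exp_continuous.comp h1
  exact hL.comp h2

end TruncAux
end TruncAuxSec

/-- For a stable (Hurwitz) linear system `x' = Ax + Bu`, `y = Cx`, with bounded measurable
input `u`, the error between the steady-state output
`y(t+T_f) = C ⬝ ∫_{-∞}^{t+T_f} exp ((t+T_f-τ) A) B u(τ) dτ` and its finite-input-history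
approximation `ŷ(t+T_f) = C ⬝ ∫_{t-T}^{t+T_f} exp ((t+T_f-τ) A) B u(τ) dτ` decays
exponentially in the history length `T`: there are `α > 0`, `β > 0`, independent of `T`,
with `|y(t+T_f) - ŷ(t+T_f)| ≤ β exp (-α T)` for all `T > 0`. -/
theorem forward_output_truncation_decay {n : ℕ}
    (A : Matrix (Fin n) (Fin n) ℝ) (hA : A.IsHurwitz)
    (B C : EuclideanSpace ℝ (Fin n)) (u : ℝ → ℝ) (hu : Measurable u)
    (Mu : ℝ) (hMu : ∀ τ : ℝ, |u τ| ≤ Mu)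
    (t Tf : ℝ) (hTf : 0 ≤ Tf) :
    ∃ α > (0 : ℝ), ∃ β > (0 : ℝ), ∀ T : ℝ, 0 < T →
      |⟪C, ∫ τ in Set.Iic (t + Tf), u τ • matVec (exp ((t + Tf - τ) • A)) B⟫
          - ⟪C, ∫ τ in (t - T)..(t + Tf), u τ • matVec (exp ((t + Tf - τ) • A)) B⟫|
        ≤ β * Real.exp (-α * T) := by
  obtain ⟨α, hα, K, hK, hdec⟩ := TruncAux.matVec_exp_decay hA
  set d := t + Tf with hd
  have hMu0 : 0 ≤ Mu := le_trans (abs_nonneg _) (hMu 0)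
  set F : ℝ → EuclideanSpace ℝ (Fin n) :=
    fun τ => u τ • matVec (exp ((d - τ) • A)) B with hF
  set c₁ : ℝ := Mu * K * ‖B‖ * Real.exp (-α * d) with hc₁
  have hc₁0 : 0 ≤ c₁ := by positivity
  -- measurability
  have hFmeas : AEStronglyMeasurable F volume := by
    apply AEStronglyMeasurable.smul hu.aestronglyMeasurable
    exact (TruncAux.continuous_matVec_exp A B d).aestronglyMeasurable
  -- pointwise bound on Iic d
  have hbound : ∀ τ ∈ Set.Iic d, ‖F τ‖ ≤ c₁ * Real.exp (α * τ) := by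
    intro τ hτ
    rw [hF]
    simp only
    rw [norm_smul, Real.norm_eq_abs]
    have h1 : 0 ≤ d - τ := by simpa using hτ
    calc |u τ| * ‖matVec (exp ((d - τ) • A)) B‖
        ≤ Mu * (K * Real.exp (-α * (d - τ)) * ‖B‖) := by
          apply mul_le_mul (hMu τ) (hdec (d - τ) h1 B) (norm_nonneg _) hMu0
      _ = c₁ * Real.exp (α * τ) := by
          rw [hc₁, show -α * (d - τ) = α * τ + -α * d by ring, Real.exp_add]
          ring
  have hGint : ∀ x : ℝ, IntegrableOn (fun τ => c₁ * Real.exp (α * τ)) (Set.Iic x) :=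
    fun x => (TruncAux.integrableOn_exp_mul_Iic hα x).const_mul c₁
  have hFint : ∀ x : ℝ, x ≤ d → IntegrableOn F (Set.Iic x) := by
    intro x hx
    apply Integrable.mono' (hGint x) hFmeas.restrict
    rw [ae_restrict_iff' measurableSet_Iic]
    exact Filter.Eventually.of_forall fun τ hτ => hbound τ (le_trans hτ hx)
  -- choose β
  refine ⟨α, hα, Mu * K * ‖B‖ * ‖C‖ / α + 1, by positivity, fun T hT => ?_⟩
  have htTd : t - T ≤ d := by rw [hd]; linarith
  have hsub := intervalIntegral.integral_Iic_sub_Iic (hFint (t - T) htTd) (hFint d le_rfl)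
  have hrw : (∫ τ in (t - T)..d, F τ) = (∫ τ in Set.Iic d, F τ) - ∫ τ in Set.Iic (t - T), F τ :=
    hsub.symm
  rw [hrw]
  have hinner : ⟪C, ∫ τ in Set.Iic d, F τ⟫
      - ⟪C, (∫ τ in Set.Iic d, F τ) - ∫ τ in Set.Iic (t - T), F τ⟫
      = ⟪C, ∫ τ in Set.Iic (t - T), F τ⟫ := by
    rw [inner_sub_right]; ring
  rw [hinner]
  -- bound the tail
  have h2 : ‖∫ τ in Set.Iic (t - T), F τ‖ ≤ c₁ * (Real.exp (α * (t - T)) / α) := by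
    have hb : ∀ᵐ τ ∂(volume.restrict (Set.Iic (t - T))), ‖F τ‖ ≤ c₁ * Real.exp (α * τ) := by
      rw [ae_restrict_iff' measurableSet_Iic]
      exact Filter.Eventually.of_forall fun τ hτ => hbound τ (le_trans hτ htTd)
    calc ‖∫ τ in Set.Iic (t - T), F τ‖ ≤ ∫ τ in Set.Iic (t - T), c₁ * Real.exp (α * τ) :=
          norm_integral_le_of_norm_le (hGint (t - T)) hb
      _ = c₁ * (Real.exp (α * (t - T)) / α) := by
          rw [integral_const_mul, TruncAux.integral_exp_mul_Iic hα]
  calc |⟪C, ∫ τ in Set.Iic (t - T), F τ⟫| ≤ ‖C‖ * ‖∫ τ in Set.Iic (t - T), F τ‖ :=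
        abs_real_inner_le_norm _ _
    _ ≤ ‖C‖ * (c₁ * (Real.exp (α * (t - T)) / α)) :=
        mul_le_mul_of_nonneg_left h2 (norm_nonneg _)
    _ = Mu * K * ‖B‖ * ‖C‖ / α * (Real.exp (-α * T) * Real.exp (-α * Tf)) := by
        rw [hc₁, hd, show α * (t - (T : ℝ)) = α * t - α * T by ring,
          show -α * (t + Tf) = -(α * t) - α * Tf by ring]
        rw [Real.exp_sub, Real.exp_sub, Real.exp_neg, show -α * T = -(α * T) by ring,
          Real.exp_neg, show -α * Tf = -(α * Tf) by ring, Real.exp_neg]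
        field_simp
    _ ≤ (Mu * K * ‖B‖ * ‖C‖ / α + 1) * Real.exp (-α * T) := by
        have he1 : Real.exp (-α * Tf) ≤ 1 := by
          apply Real.exp_le_one_iff.mpr
          nlinarith
        have hco : 0 ≤ Mu * K * ‖B‖ * ‖C‖ / α := by positivity
        have h3 : Real.exp (-α * T) * Real.exp (-α * Tf) ≤ Real.exp (-α * T) := by
          nlinarith [Real.exp_pos (-α * T)]
        nlinarith [Real.exp_pos (-α * T)]
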